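/- For every d ≥ 1 and all d×d complex (or real) matrices Σ, M, N, the function t ↦ dexp_{Σ+tN}(M) is differentiable at t = 0 and its derivative equals ∫_0^1 τ [dexp_{τΣ}(N), e^{τΣ} M e^{−τΣ}] dτ, where [A,B] := AB − BA and dexp_Σ(M) = ∑_{n≥0} ad_Σ^n(M)/(n+1)!. -/

import Mathlib

noncomputable section

attribute [local instance] Matrix.normedAddCommGroup Matrix.normedSpace

/-- `d × d` complex matrices. -/
abbrev Mat (d : ℕ) := Matrix (Fin d) (Fin d) ℂ

/-- Iterated adjoint operator. -/
def adPow {d : ℕ} (S : Mat d) : ℕ → Mat d → Mat d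
  | 0, M => M
  | n + 1, M => S * adPow S n M - adPow S n M * S

/-- `dexp_Σ(M) = ∑_{n≥0} ad_Σ^n(M)/(n+1)!`. -/
def dexp {d : ℕ} (S M : Mat d) : Mat d :=
  ∑' n : ℕ, (((n + 1).factorial : ℂ))⁻¹ • adPow S n M

/-- The Lie commutator `[A, B] = AB − BA`. -/
def lieComm {d : ℕ} (A B : Mat d) : Mat d := A * B - B * A

set_option maxHeartbeats 1000000
set_option synthInstance.maxHeartbeats 400000

namespace Stmt4Aux

variable {d : ℕ}

/-- the norm-induced uniform structure on matrices -/
@[reducible] def matUnif (d : ℕ) : UniformSpace (Mat d) :=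
  @PseudoMetricSpace.toUniformSpace _ SeminormedAddCommGroup.toPseudoMetricSpace
/-- the norm-induced topology on matrices -/
@[reducible] def matTop (d : ℕ) : TopologicalSpace (Mat d) :=
  @UniformSpace.toTopologicalSpace _ (matUnif d)

instance : @IsTopologicalRing (Mat d) (matTop d) _ := by
  exact (inferInstance : IsTopologicalRing (Mat d))

attribute [local instance 2000] matUnif matTop

abbrev E (d : ℕ) := @ContinuousLinearMap ℝ ℝ _ _ (RingHom.id ℝ) (Mat d)
  (@UniformSpace.toTopologicalSpace _ (@PseudoMetricSpace.toUniformSpace _ SeminormedAddCommGroup.toPseudoMetricSpace)) _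
  (Mat d) (@UniformSpace.toTopologicalSpace _ (@PseudoMetricSpace.toUniformSpace _ SeminormedAddCommGroup.toPseudoMetricSpace)) _ _ _

instance : CompleteSpace (E d) := FiniteDimensional.complete ℝ (E d)
instance : NormedAlgebra ℚ (E d) := NormedAlgebra.restrictScalars ℚ ℝ (E d)

/-- left multiplication as CLM -/
def lm (X : Mat d) : E d := (LinearMap.mulLeft ℝ X).toContinuousLinearMap
/-- right multiplication as CLM -/
def rm (X : Mat d) : E d := (LinearMap.mulRight ℝ X).toContinuousLinearMap
/-- ad as CLM -/
def adC (X : Mat d) : E d := lm X - rm X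

@[simp] lemma lm_apply (X Y : Mat d) : lm X Y = X * Y := rfl
@[simp] lemma rm_apply (X Y : Mat d) : rm X Y = Y * X := rfl
@[simp] lemma adC_apply (X Y : Mat d) : adC X Y = X * Y - Y * X := rfl

lemma adC_lieComm (X Y : Mat d) : adC X Y = lieComm X Y := rfl

lemma adPow_eq (X : Mat d) (n : ℕ) (M : Mat d) : adPow X n M = ((adC X) ^ n) M := by
  induction n with
  | zero => simp [adPow, Matrix.one_apply]  -- (adC X)^0 = 1, 1 M = M
  | succ n ih => rw [pow_succ']; simp [adPow, ih, ContinuousLinearMap.mul_apply]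

lemma adC_add (X Y : Mat d) : adC (X + Y) = adC X + adC Y :=
  ContinuousLinearMap.ext fun Z => by
    simp only [adC_apply, ContinuousLinearMap.add_apply]; noncomm_ring

lemma adC_smul (t : ℝ) (X : Mat d) : adC (t • X) = t • adC X :=
  ContinuousLinearMap.ext fun Z => by
    simp only [adC_apply, ContinuousLinearMap.smul_apply, smul_sub, smul_mul_assoc, mul_smul_comm]

lemma adC_sub (X Y : Mat d) : adC (X - Y) = adC X - adC Y :=
  ContinuousLinearMap.ext fun Z => by
    simp only [adC_apply, ContinuousLinearMap.sub_apply]; noncomm_ring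

/-- `adC` as a CLM in its matrix argument. -/
def adCL : Mat d →L[ℝ] E d :=
  LinearMap.toContinuousLinearMap
    { toFun := adC
      map_add' := adC_add
      map_smul' := adC_smul }

@[simp] lemma adCL_apply (X : Mat d) : adCL X = adC X := rfl

lemma norm_one_le_E : ‖(1 : E d)‖ ≤ 1 := ContinuousLinearMap.norm_id_le

lemma pow_norm_le {x : E d} {R : ℝ} (h : ‖x‖ ≤ R) : ∀ n, ‖x ^ n‖ ≤ R ^ n := by
  intro n
  induction n with
  | zero => rw [pow_zero, pow_zero]; exact norm_one_le_E
  | succ n ih =>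
      have h0 : (0:ℝ) ≤ R := le_trans (norm_nonneg _) h
      calc ‖x ^ (n+1)‖ = ‖x ^ n * x‖ := by rw [pow_succ]
        _ ≤ ‖x ^ n‖ * ‖x‖ := norm_mul_le (x ^ n) x
        _ ≤ R ^ n * R :=
            mul_le_mul (α := ℝ) ih h (norm_nonneg x) (pow_nonneg h0 n)
        _ = R ^ (n+1) := (pow_succ R n).symm

lemma norm_smul_E (y : ℝ) (x : E d) : ‖y • x‖ = |y| * ‖x‖ := by
  rw [norm_smul (α := ℝ) (β := E d), Real.norm_eq_abs]

lemma norm_smul_Mat (y : ℝ) (x : Mat d) : ‖y • x‖ = |y| * ‖x‖ := by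
  rw [norm_smul (α := ℝ) (β := Mat d), Real.norm_eq_abs]

lemma coe_smul_real (r : ℝ) (A : Mat d) : (r : ℂ) • A = r • A := by
  ext i j; simp [Matrix.smul_apply, Complex.real_smul]

lemma inv_fact_smul (k : ℕ) (A : Mat d) :
    ((k.factorial : ℂ))⁻¹ • A = ((k.factorial : ℝ))⁻¹ • A := by
  have h1 : ((k.factorial : ℂ))⁻¹ = ((((k.factorial : ℝ))⁻¹ : ℝ) : ℂ) := by
    push_cast; ring
  rw [h1, coe_smul_real]


section Deriv

variable (S N : Mat d)

/-- derivative of `(adC S + t • adC N)^n`. -/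
def Pn (n : ℕ) (t : ℝ) : E d :=
  ∑ i ∈ Finset.range n,
    (adC S + t • adC N) ^ i * adC N * (adC S + t • adC N) ^ (n - 1 - i)

lemma hasDerivAt_G (t : ℝ) :
    HasDerivAt (fun t : ℝ => adC S + t • adC N) (adC N) t := by
  simpa using ((hasDerivAt_id t).smul_const (adC N)).const_add (adC S)

lemma sum_shift (G B : E d) (n : ℕ) :
    (∑ i ∈ Finset.range n, G ^ i * B * G ^ (n - 1 - i)) * G + G ^ n * B
      = ∑ i ∈ Finset.range (n + 1), G ^ i * B * G ^ (n + 1 - 1 - i) := by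
  have key : ∀ i, i < n → G ^ (n - 1 - i) * G = G ^ (n - i) := by
    intro i hi
    rw [← pow_succ]
    congr 1
    omega
  have h1 : ∀ i, (n + 1 - 1 - i) = n - i := fun i => by omega
  calc (∑ i ∈ Finset.range n, G ^ i * B * G ^ (n - 1 - i)) * G + G ^ n * B
      = (∑ i ∈ Finset.range n, G ^ i * B * G ^ (n - i)) + G ^ n * B := by
        rw [Finset.sum_mul]
        congr 1
        refine Finset.sum_congr rfl fun i hi => ?_
        rw [Finset.mem_range] at hi
        rw [mul_assoc (G ^ i * B) (G ^ (n - 1 - i)) G, key i hi]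
    _ = ∑ i ∈ Finset.range (n + 1), G ^ i * B * G ^ (n - i) := by
        rw [Finset.sum_range_succ, Nat.sub_self, pow_zero, mul_one]
    _ = _ := by
        refine (Finset.sum_congr rfl fun i hi => ?_).symm
        rw [h1 i]

lemma Pn_succ (n : ℕ) (t : ℝ) :
    Pn S N (n + 1) t
      = Pn S N n t * (adC S + t • adC N) + (adC S + t • adC N) ^ n * adC N := by
  rw [Pn, Pn, ← sum_shift]

lemma hasDerivAt_powG (n : ℕ) (t : ℝ) :
    HasDerivAt (fun t : ℝ => (adC S + t • adC N) ^ n) (Pn S N n t) t := by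
  induction n with
  | zero =>
      simpa [Pn] using hasDerivAt_const t (1 : E d)
  | succ n ih =>
      have h := ih.mul (hasDerivAt_G S N t)
      simp only [pow_succ]
      convert h using 1
      · rfl
      · rfl
      · rfl
      · rfl
      · rw [Pn_succ]

lemma Pn_norm {R : ℝ} (hR1 : 1 ≤ R) (n : ℕ) {t : ℝ}
    (h : ‖adC S + t • adC N‖ ≤ R) :
    ‖Pn S N n t‖ ≤ n * (‖adC N‖ * R ^ n) := by
  have hR0 : (0:ℝ) ≤ R := zero_le_one.trans hR1
  set G := adC S + t • adC N with hG
  calc ‖Pn S N n t‖ ≤ ∑ i ∈ Finset.range n, ‖G ^ i * adC N * G ^ (n - 1 - i)‖ :=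
        norm_sum_le _ _
    _ ≤ ∑ _i ∈ Finset.range n, ‖adC N‖ * R ^ n := by
        refine Finset.sum_le_sum fun i hi => ?_
        rw [Finset.mem_range] at hi
        calc ‖G ^ i * adC N * G ^ (n - 1 - i)‖
            ≤ ‖G ^ i * adC N‖ * ‖G ^ (n - 1 - i)‖ := norm_mul_le _ _
          _ ≤ ‖G ^ i‖ * ‖adC N‖ * ‖G ^ (n - 1 - i)‖ := by
              exact mul_le_mul_of_nonneg_right (norm_mul_le _ _) (norm_nonneg _)
          _ ≤ R ^ i * ‖adC N‖ * R ^ (n - 1 - i) := by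
              have := pow_norm_le h i
              have := pow_norm_le h (n - 1 - i)
              gcongr <;> assumption
          _ = ‖adC N‖ * R ^ (i + (n - 1 - i)) := by rw [pow_add]; ring
          _ ≤ ‖adC N‖ * R ^ n := by
              have : i + (n - 1 - i) ≤ n := by omega
              exact mul_le_mul_of_nonneg_left
                (pow_le_pow_right₀ hR1 this) (norm_nonneg _)
    _ = n * (‖adC N‖ * R ^ n) := by
        rw [Finset.sum_const, Finset.card_range, nsmul_eq_mul]

lemma fact_inv_succ_le (n : ℕ) :
    (((n+1).factorial : ℝ))⁻¹ ≤ ((n.factorial : ℝ))⁻¹ := by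
  apply inv_anti₀
  · exact_mod_cast Nat.factorial_pos n
  · exact_mod_cast Nat.factorial_le (by omega)

lemma n_fact_inv_le (n : ℕ) :
    (n : ℝ) * (((n+1).factorial : ℝ))⁻¹ ≤ ((n.factorial : ℝ))⁻¹ := by
  have h1 : ((n+1).factorial : ℝ) = ((n:ℝ)+1) * n.factorial := by
    exact_mod_cast Nat.factorial_succ n
  have hf : (0:ℝ) < n.factorial := by exact_mod_cast Nat.factorial_pos n
  rw [h1, mul_inv]
  have h2 : (n:ℝ) * ((n:ℝ)+1)⁻¹ ≤ 1 := by
    rw [← div_eq_mul_inv]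
    exact div_le_one_of_le₀ (by linarith) (by positivity)
  calc (n:ℝ) * (((n:ℝ)+1)⁻¹ * (n.factorial:ℝ)⁻¹)
      = ((n:ℝ) * ((n:ℝ)+1)⁻¹) * (n.factorial:ℝ)⁻¹ := by ring
    _ ≤ 1 * (n.factorial:ℝ)⁻¹ := mul_le_mul_of_nonneg_right h2 (by positivity)
    _ = _ := one_mul _

lemma summable_cG (t : ℝ) :
    Summable (fun n : ℕ => (((n+1).factorial : ℝ))⁻¹ • (adC S + t • adC N) ^ n) := by
  set R : ℝ := max ‖adC S + t • adC N‖ 1 with hRdef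
  have hR1 : (1:ℝ) ≤ R := le_max_right _ _
  have hG : ‖adC S + t • adC N‖ ≤ R := le_max_left _ _
  refine Summable.of_norm_bounded (g := fun n => R ^ n / n.factorial)
    (Real.summable_pow_div_factorial R) fun n => ?_
  show _ ≤ R ^ n / (n.factorial : ℝ)
  rw [norm_smul_E, abs_of_nonneg (by positivity), div_eq_inv_mul]
  exact mul_le_mul (fact_inv_succ_le n) (pow_norm_le hG n) (norm_nonneg _)
    (by positivity)

lemma summable_cPn0 :
    Summable (fun n : ℕ => (((n+1).factorial : ℝ))⁻¹ • Pn S N n 0) := by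
  set R : ℝ := max (‖adC S‖ + ‖adC N‖) 1 with hRdef
  have hR1 : (1:ℝ) ≤ R := le_max_right _ _
  have hz : adC S + (0:ℝ) • adC N = adC S := by
    have h0 : (0:ℝ) • adC N = (0 : E d) := zero_smul ℝ (adC N)
    rw [h0, add_zero]
  have hG : ‖adC S + (0:ℝ) • adC N‖ ≤ R := by
    rw [hz]
    exact le_trans (le_add_of_nonneg_right (norm_nonneg _)) (le_max_left _ _)
  refine Summable.of_norm_bounded (g := fun n => ‖adC N‖ * (R ^ n / n.factorial))
    ((Real.summable_pow_div_factorial R).mul_left _) fun n => ?_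
  show _ ≤ ‖adC N‖ * (R ^ n / (n.factorial : ℝ))
  rw [norm_smul_E, abs_of_nonneg (by positivity)]
  calc (((n+1).factorial : ℝ))⁻¹ * ‖Pn S N n 0‖
      ≤ (((n+1).factorial : ℝ))⁻¹ * ((n:ℝ) * (‖adC N‖ * R ^ n)) := by
        exact mul_le_mul_of_nonneg_left (Pn_norm S N hR1 n hG) (by positivity)
    _ = ((n:ℝ) * (((n+1).factorial : ℝ))⁻¹) * (‖adC N‖ * R ^ n) := by ring
    _ ≤ ((n.factorial : ℝ))⁻¹ * (‖adC N‖ * R ^ n) :=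
        mul_le_mul_of_nonneg_right (n_fact_inv_le n) (by positivity)
    _ = ‖adC N‖ * (R ^ n / n.factorial) := by ring

set_option maxHeartbeats 1000000 in
theorem hasDerivAt_F :
    HasDerivAt
      (fun t : ℝ => ∑' n : ℕ, (((n+1).factorial : ℝ))⁻¹ • (adC S + t • adC N) ^ n)
      (∑' n : ℕ, (((n+1).factorial : ℝ))⁻¹ • Pn S N n 0) 0 := by
  set R : ℝ := max (‖adC S‖ + ‖adC N‖) 1 with hRdef
  have hR1 : (1:ℝ) ≤ R := le_max_right _ _
  have hball : ∀ y : ℝ, y ∈ Metric.ball (0:ℝ) 1 → ‖adC S + y • adC N‖ ≤ R := by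
    intro y hy
    rw [Metric.mem_ball, dist_zero_right, Real.norm_eq_abs] at hy
    calc ‖adC S + y • adC N‖ ≤ ‖adC S‖ + ‖y • adC N‖ := norm_add_le _ _
      _ = ‖adC S‖ + |y| * ‖adC N‖ := by rw [norm_smul_E]
      _ ≤ ‖adC S‖ + 1 * ‖adC N‖ := by
          exact add_le_add_right
            (mul_le_mul_of_nonneg_right hy.le (norm_nonneg _)) _
      _ = ‖adC S‖ + ‖adC N‖ := by ring
      _ ≤ R := le_max_left _ _
  refine hasDerivAt_tsum_of_isPreconnected
    (u := fun n => ‖adC N‖ * (R ^ n / n.factorial))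
    (g := fun n (y : ℝ) => (((n+1).factorial : ℝ))⁻¹ • (adC S + y • adC N) ^ n)
    (g' := fun n (y : ℝ) => (((n+1).factorial : ℝ))⁻¹ • Pn S N n y)
    (y₀ := 0) (y := 0)
    ((Real.summable_pow_div_factorial R).mul_left _)
    Metric.isOpen_ball ((convex_ball (0:ℝ) 1).isPreconnected)
    (fun n y _ => (hasDerivAt_powG S N n y).const_smul (((n+1).factorial : ℝ))⁻¹)
    (fun n y hy => ?_) (Metric.mem_ball_self one_pos) ?_
    (Metric.mem_ball_self one_pos)
  · rw [norm_smul_E, abs_of_nonneg (by positivity)]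
    calc (((n+1).factorial : ℝ))⁻¹ * ‖Pn S N n y‖
        ≤ (((n+1).factorial : ℝ))⁻¹ * ((n:ℝ) * (‖adC N‖ * R ^ n)) :=
          mul_le_mul_of_nonneg_left (Pn_norm S N hR1 n (hball y hy)) (by positivity)
      _ = ((n:ℝ) * (((n+1).factorial : ℝ))⁻¹) * (‖adC N‖ * R ^ n) := by ring
      _ ≤ ((n.factorial : ℝ))⁻¹ * (‖adC N‖ * R ^ n) :=
          mul_le_mul_of_nonneg_right (n_fact_inv_le n) (by positivity)
      _ = ‖adC N‖ * (R ^ n / n.factorial) := by ring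
  · exact summable_cG S N 0

end Deriv


section Conj

lemma lm_pow (X : Mat d) (n : ℕ) (Y : Mat d) : ((lm X) ^ n) Y = X ^ n * Y := by
  induction n with
  | zero => simp
  | succ n ih =>
      rw [pow_succ', ContinuousLinearMap.mul_apply, ih, lm_apply, ← mul_assoc, ← pow_succ']

lemma rm_pow (X : Mat d) (n : ℕ) (Y : Mat d) : ((rm X) ^ n) Y = Y * X ^ n := by
  induction n generalizing Y with
  | zero => simp
  | succ n ih =>
      rw [pow_succ', ContinuousLinearMap.mul_apply, rm_apply, ih, mul_assoc, ← pow_succ]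

lemma commute_lm_rm (X Y : Mat d) : Commute (lm X) (rm Y) :=
  ContinuousLinearMap.ext fun Z => by
    simp only [ContinuousLinearMap.mul_apply, lm_apply, rm_apply, mul_assoc]

lemma adC_eq_lm_rm (X : Mat d) : adC X = lm X + rm (-X) :=
  ContinuousLinearMap.ext fun Z => by
    simp only [adC_apply, ContinuousLinearMap.add_apply, lm_apply, rm_apply, mul_neg,
      sub_eq_add_neg]

lemma tsum_apply_E {f : ℕ → E d} (hf : Summable f) (M' : Mat d) :
    (∑' n : ℕ, f n) M' = ∑' n : ℕ, (f n) M' := by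
  have h := ContinuousLinearMap.map_tsum (ContinuousLinearMap.apply ℝ (Mat d) M') hf
  simpa only [ContinuousLinearMap.apply_apply] using h

lemma exp_E_eq (G : E d) :
    NormedSpace.exp G = ∑' n : ℕ, ((n.factorial : ℝ))⁻¹ • G ^ n := by
  rw [NormedSpace.exp_eq_tsum ℝ]

lemma summable_expMat (Y : Mat d) :
    Summable (fun n : ℕ => ((n.factorial : ℝ))⁻¹ • Y ^ n) := by
  have h := (NormedSpace.expSeries_summable' (𝕂 := ℝ) (lm Y)).map
    (ContinuousLinearMap.apply ℝ (Mat d) (1 : Mat d)) (ContinuousLinearMap.continuous _)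
  refine h.congr fun n => ?_
  simp only [Function.comp_apply, ContinuousLinearMap.apply_apply, map_smul, lm_pow, mul_one]

lemma exp_complex_eq (Y : Mat d) :
    NormedSpace.exp Y = ∑' n : ℕ, ((n.factorial : ℝ))⁻¹ • Y ^ n := by
  rw [NormedSpace.exp_eq_tsum ℂ]
  exact tsum_congr fun n => inv_fact_smul n _

lemma exp_lm (Y M' : Mat d) :
    NormedSpace.exp (lm Y) M' = NormedSpace.exp Y * M' := by
  rw [exp_E_eq, tsum_apply_E (NormedSpace.expSeries_summable' (𝕂 := ℝ) (lm Y))]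
  rw [exp_complex_eq]
  have h2 := ContinuousLinearMap.map_tsum (rm M') (summable_expMat Y)
  rw [rm_apply] at h2
  rw [h2]
  exact tsum_congr fun n => by
    simp only [ContinuousLinearMap.smul_apply, lm_pow, map_smul, rm_apply]

lemma exp_rm (Y M' : Mat d) :
    NormedSpace.exp (rm Y) M' = M' * NormedSpace.exp Y := by
  rw [exp_E_eq, tsum_apply_E (NormedSpace.expSeries_summable' (𝕂 := ℝ) (rm Y))]
  rw [exp_complex_eq]
  have h2 := ContinuousLinearMap.map_tsum (lm M') (summable_expMat Y)
  rw [lm_apply] at h2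
  rw [h2]
  exact tsum_congr fun n => by
    simp only [ContinuousLinearMap.smul_apply, rm_pow, map_smul, lm_apply]

lemma exp_adC_apply (X M' : Mat d) :
    NormedSpace.exp (adC X) M'
      = NormedSpace.exp X * M' * NormedSpace.exp (-X) := by
  have h1 : NormedSpace.exp (adC X)
      = NormedSpace.exp (lm X) * NormedSpace.exp (rm (-X)) := by
    rw [adC_eq_lm_rm, NormedSpace.exp_add_of_commute (commute_lm_rm X (-X))]
  rw [h1, ContinuousLinearMap.mul_apply, exp_rm, exp_lm, mul_assoc]

lemma conj_exp (X M' : Mat d) :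
    NormedSpace.exp X * M' * NormedSpace.exp (-X)
      = ∑' n : ℕ, ((n.factorial : ℝ))⁻¹ • adPow X n M' := by
  rw [← exp_adC_apply, exp_E_eq,
    tsum_apply_E (NormedSpace.expSeries_summable' (𝕂 := ℝ) (adC X))]
  exact tsum_congr fun n => by
    simp only [ContinuousLinearMap.apply_apply, ContinuousLinearMap.smul_apply, adPow_eq]

end Conj


section Comb

instance : IsScalarTower ℝ (E d) (E d) :=
  ⟨fun r f g => ContinuousLinearMap.ext fun x => by
    show ((r • f) * g) x = (r • (f * g)) x
    simp only [ContinuousLinearMap.mul_apply, ContinuousLinearMap.smul_apply]⟩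

instance : SMulCommClass ℝ (E d) (E d) :=
  ⟨fun r f g => ContinuousLinearMap.ext fun x => by
    show (r • (f * g)) x = (f * (r • g)) x
    simp only [ContinuousLinearMap.mul_apply, ContinuousLinearMap.smul_apply, map_smul]⟩

lemma adPow_smul (t : ℝ) (X M' : Mat d) (n : ℕ) :
    adPow (t • X) n M' = t ^ n • adPow X n M' := by
  rw [adPow_eq, adC_smul, smul_pow, ContinuousLinearMap.smul_apply, ← adPow_eq]

lemma adPow_add_exp (X : Mat d) (a b : ℕ) (M' : Mat d) :
    adPow X (a + b) M' = adPow X a (adPow X b M') := by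
  rw [adPow_eq, pow_add, ContinuousLinearMap.mul_apply, ← adPow_eq, ← adPow_eq]

lemma adPow_sub_arg (X A B : Mat d) (n : ℕ) :
    adPow X n (A - B) = adPow X n A - adPow X n B := by
  rw [adPow_eq, adPow_eq, adPow_eq, map_sub]

lemma adPow_succ_def (S' M' : Mat d) (n : ℕ) :
    adPow S' (n+1) M' = S' * adPow S' n M' - adPow S' n M' * S' := rfl

lemma adPow_mul (S' X Y : Mat d) (n : ℕ) :
    adPow S' n (X * Y)
      = ∑ p ∈ Finset.range (n+1),
          n.choose p • (adPow S' p X * adPow S' (n-p) Y) := by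
  induction n with
  | zero => simp [adPow]
  | succ n ih =>
      have key : ∀ A B : Mat d,
          S' * (A * B) - (A * B) * S' = (S' * A - A * S') * B + A * (S' * B - B * S') :=
        fun A B => by noncomm_ring
      rw [adPow_succ_def, ih, Finset.mul_sum, Finset.sum_mul, ← Finset.sum_sub_distrib]
      have e1 : ∀ p ∈ Finset.range (n+1),
          S' * (n.choose p • (adPow S' p X * adPow S' (n-p) Y))
            - (n.choose p • (adPow S' p X * adPow S' (n-p) Y)) * S'
          = n.choose p • (adPow S' (p+1) X * adPow S' (n-p) Y)
            + n.choose p • (adPow S' p X * adPow S' ((n-p)+1) Y) := by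
        intro p _
        rw [mul_smul_comm, smul_mul_assoc, ← smul_sub, key, smul_add,
          adPow_succ_def, adPow_succ_def]
      rw [Finset.sum_congr rfl e1, Finset.sum_add_distrib]
      -- now rearrange to target
      have target_split :
          ∑ p ∈ Finset.range (n+2), (n+1).choose p • (adPow S' p X * adPow S' (n+1-p) Y)
          = (∑ p ∈ Finset.range (n+1),
              n.choose p • (adPow S' (p+1) X * adPow S' (n-p) Y))
            + (∑ p ∈ Finset.range (n+1),
              n.choose (p+1) • (adPow S' (p+1) X * adPow S' (n-p) Y)
              + (1 : ℕ) • (adPow S' 0 X * adPow S' (n+1) Y)) := by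
        rw [Finset.sum_range_succ' (fun p => (n+1).choose p • (adPow S' p X * adPow S' (n+1-p) Y)) (n+1)]
        have e2 : ∀ p ∈ Finset.range (n+1),
            (n+1).choose (p+1) • (adPow S' (p+1) X * adPow S' (n+1-(p+1)) Y)
            = n.choose p • (adPow S' (p+1) X * adPow S' (n-p) Y)
              + n.choose (p+1) • (adPow S' (p+1) X * adPow S' (n-p) Y) := by
          intro p _
          have hsub : n + 1 - (p+1) = n - p := by omega
          rw [hsub, Nat.choose_succ_succ, add_smul]
        rw [Finset.sum_congr rfl e2, Finset.sum_add_distrib]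
        rw [Nat.sub_zero, Nat.choose_zero_right, add_assoc]
      rw [target_split]
      congr 1
      -- second piece: reverse sum_range_succ'
      have e3 : ∑ p ∈ Finset.range (n+1),
            n.choose (p+1) • (adPow S' (p+1) X * adPow S' (n-p) Y)
            + (1:ℕ) • (adPow S' 0 X * adPow S' (n+1) Y)
          = ∑ p ∈ Finset.range (n+2), n.choose p • (adPow S' p X * adPow S' (n+1-p) Y) := by
        rw [Finset.sum_range_succ' (fun p => n.choose p • (adPow S' p X * adPow S' (n+1-p) Y)) (n+1)]
        congr 1
        · refine Finset.sum_congr rfl fun p _ => ?_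
          have hx : n + 1 - (p + 1) = n - p := by omega
          rw [hx]
        · rw [Nat.sub_zero, Nat.choose_zero_right]
      have e5 : ∑ p ∈ Finset.range (n+2), n.choose p • (adPow S' p X * adPow S' (n+1-p) Y)
          = ∑ p ∈ Finset.range (n+1), n.choose p • (adPow S' p X * adPow S' (n+1-p) Y) := by
        rw [Finset.sum_range_succ, Nat.choose_succ_self, zero_smul, add_zero]
      rw [e3, e5]
      refine Finset.sum_congr rfl fun p hp => ?_
      rw [Finset.mem_range] at hp
      have hx : n - p + 1 = n + 1 - p := by omega
      rw [hx]

lemma adPow_lieComm (S' X Y : Mat d) (n : ℕ) :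
    adPow S' n (lieComm X Y)
      = ∑ p ∈ Finset.range (n+1),
          n.choose p • lieComm (adPow S' p X) (adPow S' (n-p) Y) := by
  have hl : lieComm X Y = X * Y - Y * X := rfl
  rw [hl, adPow_sub_arg, adPow_mul, adPow_mul]
  have hrefl := Finset.sum_range_reflect
    (fun q => n.choose q • (adPow S' q Y * adPow S' (n-q) X)) (n+1)
  have e4 : ∀ j ∈ Finset.range (n+1),
      n.choose (n + 1 - 1 - j) • (adPow S' (n+1-1-j) Y * adPow S' (n-(n+1-1-j)) X)
      = n.choose j • (adPow S' (n-j) Y * adPow S' j X) := by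
    intro j hj
    rw [Finset.mem_range] at hj
    have h1 : n + 1 - 1 - j = n - j := by omega
    have h2 : n - (n - j) = j := by omega
    rw [h1, h2, Nat.choose_symm (by omega)]
  rw [← hrefl, Finset.sum_congr rfl e4, ← Finset.sum_sub_distrib]
  refine Finset.sum_congr rfl fun p _ => ?_
  rw [← smul_sub]
  rfl

lemma sum_choose_col (m p : ℕ) :
    ∑ i ∈ Finset.range (m+1), i.choose p = (m+1).choose (p+1) := by
  rw [← Nat.sum_Icc_choose m p]
  refine (Finset.sum_subset ?_ ?_).symm
  · intro i hi
    rw [Finset.mem_Icc] at hi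
    rw [Finset.mem_range]
    omega
  · intro i hi hni
    rw [Finset.mem_range] at hi
    rw [Finset.mem_Icc] at hni
    exact Nat.choose_eq_zero_of_lt (by omega)

end Comb


section Series

variable (S M N : Mat d)

/-- scalar multiplication as element of `E d`. -/
def smulC (τ : ℝ) : E d := τ • (1 : E d)

@[simp] lemma smulC_apply (τ : ℝ) (Y : Mat d) : smulC τ Y = τ • Y := by
  show (τ • (1 : E d)) Y = τ • Y
  rw [ContinuousLinearMap.smul_apply, ContinuousLinearMap.one_apply]

lemma dexp_eq_tsum_real (X W : Mat d) :
    dexp X W = ∑' n : ℕ, (((n+1).factorial : ℝ))⁻¹ • adPow X n W :=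
  tsum_congr fun n => inv_fact_smul (n+1) _

lemma norm_adPow_le (X W : Mat d) (n : ℕ) :
    ‖adPow X n W‖ ≤ (max ‖adC X‖ 1) ^ n * ‖W‖ := by
  rw [adPow_eq]
  calc ‖((adC X) ^ n) W‖ ≤ ‖(adC X) ^ n‖ * ‖W‖ := ContinuousLinearMap.le_opNorm _ _
    _ ≤ (max ‖adC X‖ 1) ^ n * ‖W‖ :=
        mul_le_mul_of_nonneg_right (pow_norm_le (le_max_left _ _) n) (norm_nonneg _)

lemma summable_coef_adPow (X W : Mat d) (τ : ℝ) (c : ℕ → ℝ)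
    (hc : ∀ n, |c n| ≤ ((n.factorial : ℝ))⁻¹) :
    Summable (fun n : ℕ => (c n * τ ^ n) • adPow X n W) := by
  set R : ℝ := max ‖adC X‖ 1 with hRdef
  have hR0 : (0:ℝ) ≤ R := le_trans zero_le_one (le_max_right _ _)
  refine Summable.of_norm_bounded (g := fun n => ((R * |τ|) ^ n / n.factorial) * ‖W‖)
    ((Real.summable_pow_div_factorial (R * |τ|)).mul_right _) fun n => ?_
  rw [norm_smul_Mat, abs_mul, abs_pow]
  calc |c n| * |τ| ^ n * ‖adPow X n W‖
      ≤ ((n.factorial : ℝ))⁻¹ * |τ| ^ n * (R ^ n * ‖W‖) := by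
        have h1 := norm_adPow_le X W n
        have h2 := hc n
        have h3 : (0:ℝ) ≤ |τ| ^ n := by positivity
        exact mul_le_mul (mul_le_mul_of_nonneg_right h2 h3) h1 (norm_nonneg _)
          (by positivity)
    _ = ((R * |τ|) ^ n / n.factorial) * ‖W‖ := by
        rw [mul_pow]
        ring

lemma abs_cA_le (n : ℕ) : |(((n+1).factorial : ℝ))⁻¹| ≤ ((n.factorial : ℝ))⁻¹ := by
  rw [abs_of_nonneg (by positivity)]
  exact fact_inv_succ_le n

lemma abs_cB_le (n : ℕ) : |((n.factorial : ℝ))⁻¹| ≤ ((n.factorial : ℝ))⁻¹ := by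
  rw [abs_of_nonneg (by positivity)]

lemma dexp_smul_tsum (τ : ℝ) :
    dexp (τ • S) N
      = ∑' a : ℕ, ((((a+1).factorial : ℝ))⁻¹ * τ ^ a) • adPow S a N := by
  rw [dexp_eq_tsum_real]
  exact tsum_congr fun a => by rw [adPow_smul, smul_smul]

lemma conj_smul_tsum (τ : ℝ) :
    NormedSpace.exp (τ • S) * M * NormedSpace.exp (-(τ • S))
      = ∑' b : ℕ, (((b.factorial : ℝ))⁻¹ * τ ^ b) • adPow S b M := by
  rw [conj_exp]
  exact tsum_congr fun b => by rw [adPow_smul, smul_smul]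

/-- The operator norm of `adCL`, as an opaque constant. -/
def Kd (d : ℕ) : ℝ := ‖(adCL (d := d))‖

lemma Kd_nonneg : 0 ≤ Kd d := norm_nonneg (adCL (d := d))

set_option maxHeartbeats 1600000 in
set_option synthInstance.maxHeartbeats 400000 in
lemma norm_adC_le (A : Mat d) : ‖adC A‖ ≤ Kd d * ‖A‖ := by
  have h := (adCL (d := d)).le_opNorm A
  rwa [adCL_apply] at h

/-- The antidiagonal coefficient matrices. -/
def Zc (p : ℕ × ℕ) : Mat d :=
  ((((p.1+1).factorial : ℝ))⁻¹ * (((p.2).factorial : ℝ))⁻¹)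
    • lieComm (adPow S p.1 N) (adPow S p.2 M)

lemma Zc_mk (a b : ℕ) : Zc S M N (a, b)
    = ((((a+1).factorial : ℝ))⁻¹ * ((b.factorial : ℝ))⁻¹)
      • lieComm (adPow S a N) (adPow S b M) := rfl

set_option maxHeartbeats 1600000 in
set_option synthInstance.maxHeartbeats 400000 in
lemma norm_lieComm_le (A B : Mat d) :
    ‖lieComm A B‖ ≤ Kd d * ‖A‖ * ‖B‖ := by
  calc ‖lieComm A B‖ = ‖(adC A) B‖ := rfl
    _ ≤ ‖adC A‖ * ‖B‖ := ContinuousLinearMap.le_opNorm _ _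
    _ ≤ (Kd d * ‖A‖) * ‖B‖ :=
        mul_le_mul_of_nonneg_right (norm_adC_le A) (norm_nonneg _)

lemma normZ_le (p : ℕ × ℕ) :
    ‖Zc S M N p‖
      ≤ (Kd d * ‖N‖ * ‖M‖)
        * (((max ‖adC S‖ 1) ^ p.1 / (p.1).factorial)
          * ((max ‖adC S‖ 1) ^ p.2 / (p.2).factorial)) := by
  obtain ⟨a, b⟩ := p
  set R : ℝ := max ‖adC S‖ 1 with hRdef
  have hR0 : (0:ℝ) ≤ R := le_trans zero_le_one (le_max_right _ _)
  have hK0 : (0:ℝ) ≤ Kd d := Kd_nonneg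
  have h1 : ‖lieComm (adPow S a N) (adPow S b M)‖
      ≤ Kd d * (R ^ a * ‖N‖) * (R ^ b * ‖M‖) := by
    calc ‖lieComm (adPow S a N) (adPow S b M)‖
        ≤ Kd d * ‖adPow S a N‖ * ‖adPow S b M‖ := norm_lieComm_le _ _
      _ ≤ Kd d * (R ^ a * ‖N‖) * (R ^ b * ‖M‖) := by
          have ha := norm_adPow_le S N a
          have hb := norm_adPow_le S M b
          exact mul_le_mul (mul_le_mul_of_nonneg_left ha hK0) hb (norm_nonneg _)
            (mul_nonneg hK0 (by positivity))
  rw [Zc_mk, norm_smul_Mat]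
  calc |(((a+1).factorial : ℝ))⁻¹ * ((b.factorial : ℝ))⁻¹|
        * ‖lieComm (adPow S a N) (adPow S b M)‖
      ≤ (((a.factorial : ℝ))⁻¹ * ((b.factorial : ℝ))⁻¹)
        * (Kd d * (R ^ a * ‖N‖) * (R ^ b * ‖M‖)) := by
        refine mul_le_mul ?_ h1 (norm_nonneg _) (by positivity)
        rw [abs_mul]
        exact mul_le_mul (abs_cA_le a) (abs_cB_le b) (abs_nonneg _) (by positivity)
    _ = (Kd d * ‖N‖ * ‖M‖) * ((R ^ a / a.factorial) * (R ^ b / b.factorial)) := by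
        ring

lemma summable_normZ : Summable (fun p : ℕ × ℕ => ‖Zc S M N p‖) := by
  set R : ℝ := max ‖adC S‖ 1 with hRdef
  have hs : Summable (fun p : ℕ × ℕ =>
      (R ^ p.1 / (p.1).factorial) * (R ^ p.2 / (p.2).factorial)) :=
    Summable.mul_of_nonneg (Real.summable_pow_div_factorial R)
      (Real.summable_pow_div_factorial R) (fun a => by positivity) (fun b => by positivity)
  exact Summable.of_nonneg_of_le (fun p => norm_nonneg _) (fun p => normZ_le S M N p)
    (hs.mul_left _)

lemma summable_powZ (τ : ℝ) :
    Summable (fun p : ℕ × ℕ => τ ^ (p.1 + p.2 + 1) • Zc S M N p) := by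
  set R : ℝ := max ‖adC S‖ 1 with hRdef
  have hR0 : (0:ℝ) ≤ R := le_trans zero_le_one (le_max_right _ _)
  have hK0 : (0:ℝ) ≤ Kd d := Kd_nonneg
  have hC0 : (0:ℝ) ≤ Kd d * ‖N‖ * ‖M‖ :=
    mul_nonneg (mul_nonneg hK0 (norm_nonneg _)) (norm_nonneg _)
  have hs : Summable (fun p : ℕ × ℕ =>
      ((R * |τ|) ^ p.1 / (p.1).factorial) * ((R * |τ|) ^ p.2 / (p.2).factorial)) :=
    Summable.mul_of_nonneg (Real.summable_pow_div_factorial _)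
      (Real.summable_pow_div_factorial _) (fun a => by positivity) (fun b => by positivity)
  refine Summable.of_norm_bounded (hs.mul_left (|τ| * (Kd d * ‖N‖ * ‖M‖))) fun p => ?_
  obtain ⟨a, b⟩ := p
  rw [norm_smul_Mat, abs_pow]
  calc |τ| ^ (a + b + 1) * ‖Zc S M N (a, b)‖
      ≤ |τ| ^ (a + b + 1)
          * ((Kd d * ‖N‖ * ‖M‖) * ((R ^ a / a.factorial) * (R ^ b / b.factorial))) :=
        mul_le_mul_of_nonneg_left (normZ_le S M N (a, b)) (by positivity)
    _ = |τ| * (Kd d * ‖N‖ * ‖M‖)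
          * (((R * |τ|) ^ a / a.factorial) * ((R * |τ|) ^ b / b.factorial)) := by
        rw [show a + b + 1 = 1 + (a + b) by omega, pow_add, pow_add, pow_one, mul_pow, mul_pow]
        ring

lemma integrand_eq (τ : ℝ) :
    τ • lieComm (dexp (τ • S) N)
        (NormedSpace.exp (τ • S) * M * NormedSpace.exp (-(τ • S)))
      = ∑' p : ℕ × ℕ, τ ^ (p.1 + p.2 + 1) • Zc S M N p := by
  set cA : ℕ → ℝ := fun a => (((a+1).factorial : ℝ))⁻¹ with hcA
  set cB : ℕ → ℝ := fun b => ((b.factorial : ℝ))⁻¹ with hcB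
  set x : ℕ → Mat d := fun a => (cA a * τ ^ a) • adPow S a N with hx_def
  set y : ℕ → Mat d := fun b => (cB b * τ ^ b) • adPow S b M with hy_def
  have hx : Summable x := summable_coef_adPow S N τ cA (abs_cA_le)
  have hy : Summable y := summable_coef_adPow S M τ cB (abs_cB_le)
  have h1 : dexp (τ • S) N = ∑' a, x a := dexp_smul_tsum S N τ
  have h2 : NormedSpace.exp (τ • S) * M * NormedSpace.exp (-(τ • S)) = ∑' b, y b :=
    conj_smul_tsum S M τ
  rw [h1, h2]
  have hAB : ∀ a b : ℕ, (adC (x a)) (y b)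
      = (cA a * τ ^ a) • ((cB b * τ ^ b) • lieComm (adPow S a N) (adPow S b M)) := by
    intro a b
    show adC ((cA a * τ ^ a) • adPow S a N) ((cB b * τ ^ b) • adPow S b M) = _
    rw [adC_smul, ContinuousLinearMap.smul_apply, map_smul]
    rfl
  have hterm : ∀ a b : ℕ,
      τ ^ (a + b + 1) • Zc S M N (a, b) = τ • (adC (x a)) (y b) := by
    intro a b
    rw [hAB a b, Zc_mk]
    have e1 : τ ^ (a + b + 1) • (((cA a * cB b)) • lieComm (adPow S a N) (adPow S b M))
        = (τ ^ (a + b + 1) * (cA a * cB b)) • lieComm (adPow S a N) (adPow S b M) :=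
      smul_smul _ _ _
    have e2 : τ • ((cA a * τ ^ a) • ((cB b * τ ^ b) • lieComm (adPow S a N) (adPow S b M)))
        = (τ * (cA a * τ ^ a) * (cB b * τ ^ b)) • lieComm (adPow S a N) (adPow S b M) := by
      rw [smul_smul, smul_smul]
    rw [e1, e2]
    congr 1
    ring
  have hinner : ∀ a : ℕ, ∑' b, τ ^ (a + b + 1) • Zc S M N (a, b)
      = τ • (adC (x a)) (∑' b, y b) := by
    intro a
    have s1 : Summable (fun b => (adC (x a)) (y b)) :=
      hy.map (adC (x a)) (adC (x a)).continuous
    calc ∑' b, τ ^ (a + b + 1) • Zc S M N (a, b)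
        = ∑' b, smulC τ ((adC (x a)) (y b)) := by
          refine tsum_congr fun b => ?_
          rw [hterm a b, smulC_apply]
      _ = smulC τ (∑' b, (adC (x a)) (y b)) :=
          (ContinuousLinearMap.map_tsum (smulC τ) s1).symm
      _ = τ • (adC (x a)) (∑' b, y b) := by
          rw [← ContinuousLinearMap.map_tsum (adC (x a)) hy, smulC_apply]
  have sxa : Summable (fun a => (adCL (d := d)) (x a)) :=
    hx.map (adCL (d := d)) (adCL (d := d)).continuous
  have sxa2 : Summable (fun a => (adC (x a)) (∑' b, y b)) := by
    have h := sxa.map (ContinuousLinearMap.apply ℝ (Mat d) (∑' b, y b))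
      (ContinuousLinearMap.continuous _)
    refine h.congr fun a => ?_
    simp only [Function.comp_apply, ContinuousLinearMap.apply_apply, adCL_apply]
  calc τ • lieComm (∑' a, x a) (∑' b, y b)
      = τ • (adCL (∑' a, x a)) (∑' b, y b) := rfl
    _ = τ • (∑' a, adCL (x a)) (∑' b, y b) := by
        rw [ContinuousLinearMap.map_tsum (adCL (d := d)) hx]
    _ = τ • ∑' a, (adC (x a)) (∑' b, y b) := by
        rw [tsum_apply_E sxa]
        rfl
    _ = smulC τ (∑' a, (adC (x a)) (∑' b, y b)) := by rw [smulC_apply]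
    _ = ∑' a, smulC τ ((adC (x a)) (∑' b, y b)) :=
        ContinuousLinearMap.map_tsum (smulC τ) sxa2
    _ = ∑' a, ∑' b, τ ^ (a + b + 1) • Zc S M N (a, b) := by
        refine tsum_congr fun a => ?_
        rw [smulC_apply, hinner a]
    _ = ∑' p : ℕ × ℕ, τ ^ (p.1 + p.2 + 1) • Zc S M N p :=
        (Summable.tsum_prod' (summable_powZ S M N τ) ((summable_powZ S M N τ).prod_factor)).symm

end Series


section Integral

variable (S M N : Mat d)

lemma integrable_powZ (p : ℕ × ℕ) :
    MeasureTheory.IntegrableOn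
      (fun τ : ℝ => τ ^ (p.1 + p.2 + 1) • Zc S M N p) (Set.Ioc 0 1) := by
  exact ((continuous_pow (p.1 + p.2 + 1)).smul continuous_const).integrableOn_Ioc

open intervalIntegral in
lemma integral_pow_Ioc (k : ℕ) :
    ∫ τ in Set.Ioc (0:ℝ) 1, τ ^ k = (((k + 1 : ℕ)) : ℝ)⁻¹ := by
  rw [← integral_of_le zero_le_one, integral_pow]
  push_cast
  rw [one_pow, zero_pow (by omega : k + 1 ≠ 0)]
  rw [sub_zero, one_div]

lemma integral_term (p : ℕ × ℕ) :
    (∫ τ in Set.Ioc (0:ℝ) 1, τ ^ (p.1 + p.2 + 1) • Zc S M N p)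
      = (((p.1 + p.2 + 2 : ℕ)) : ℝ)⁻¹ • Zc S M N p := by
  rw [integral_smul_const, integral_pow_Ioc]

lemma summable_integral_norms :
    Summable (fun p : ℕ × ℕ =>
      ∫ τ in Set.Ioc (0:ℝ) 1, ‖τ ^ (p.1 + p.2 + 1) • Zc S M N p‖) := by
  refine Summable.of_nonneg_of_le
    (fun p => MeasureTheory.integral_nonneg (fun τ => norm_nonneg _))
    (fun p => ?_) (summable_normZ S M N)
  have hle : ∀ τ ∈ Set.Ioc (0:ℝ) 1,
      ‖τ ^ (p.1 + p.2 + 1) • Zc S M N p‖ ≤ ‖Zc S M N p‖ := by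
    intro τ hτ
    rw [norm_smul_Mat, abs_pow]
    calc |τ| ^ (p.1 + p.2 + 1) * ‖Zc S M N p‖ ≤ 1 * ‖Zc S M N p‖ := by
          refine mul_le_mul_of_nonneg_right ?_ (norm_nonneg _)
          refine pow_le_one₀ (abs_nonneg _) ?_
          rw [abs_of_nonneg hτ.1.le]
          exact hτ.2
      _ = ‖Zc S M N p‖ := one_mul _
  calc (∫ τ in Set.Ioc (0:ℝ) 1, ‖τ ^ (p.1 + p.2 + 1) • Zc S M N p‖)
      ≤ ∫ _τ in Set.Ioc (0:ℝ) 1, ‖Zc S M N p‖ := by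
        refine MeasureTheory.setIntegral_mono_on ((integrable_powZ S M N p).norm) ?_
          measurableSet_Ioc hle
        exact (MeasureTheory.integrableOn_const_iff).mpr
          (Or.inr (by rw [Real.volume_Ioc]; exact ENNReal.ofReal_lt_top))
    _ = ‖Zc S M N p‖ := by
        rw [MeasureTheory.setIntegral_const, Real.volume_real_Ioc]
        norm_num

open intervalIntegral in
lemma integral_eq :
    (∫ τ in (0:ℝ)..1,
        τ • lieComm (dexp (τ • S) N)
          (NormedSpace.exp (τ • S) * M * NormedSpace.exp (-(τ • S))))
      = ∑' p : ℕ × ℕ, (((p.1 + p.2 + 2 : ℕ)) : ℝ)⁻¹ • Zc S M N p := by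
  rw [integral_of_le zero_le_one]
  rw [MeasureTheory.setIntegral_congr_fun measurableSet_Ioc
    (fun τ _ => integrand_eq S M N τ)]
  rw [← MeasureTheory.integral_tsum_of_summable_integral_norm
    (fun p => integrable_powZ S M N p) (summable_integral_norms S M N)]
  exact tsum_congr fun p => integral_term S M N p

end Integral

section Final

variable (S M N : Mat d)

/-- The derivative series terms. -/
def Qm (n : ℕ) : Mat d :=
  ∑ i ∈ Finset.range n, adPow S i (lieComm N (adPow S (n - 1 - i) M))

lemma PnM (n : ℕ) : (Pn S N n 0) M = Qm S M N n := by
  unfold Pn Qm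
  rw [ContinuousLinearMap.sum_apply]
  refine Finset.sum_congr rfl fun i hi => ?_
  have hz : adC S + (0:ℝ) • adC N = adC S := by
    have h0 : (0:ℝ) • adC N = (0 : E d) := zero_smul ℝ (adC N)
    rw [h0, add_zero]
  rw [hz, ContinuousLinearMap.mul_apply, ContinuousLinearMap.mul_apply]
  rw [← adPow_eq, ← adPow_eq]
  rfl

lemma summable_cQm :
    Summable (fun n : ℕ => (((n+1).factorial : ℝ))⁻¹ • Qm S M N n) := by
  have h := (summable_cPn0 S N).map (ContinuousLinearMap.apply ℝ (Mat d) M)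
    (ContinuousLinearMap.continuous _)
  refine h.congr fun n => ?_
  simp only [Function.comp_apply, ContinuousLinearMap.apply_apply,
    ContinuousLinearMap.smul_apply]
  rw [PnM]

lemma perM (m : ℕ) :
    (((m+2).factorial : ℝ))⁻¹ • Qm S M N (m+1)
      = (((m + 2 : ℕ)) : ℝ)⁻¹ • ∑ kl ∈ Finset.HasAntidiagonal.antidiagonal m, Zc S M N kl := by
  have hQ : Qm S M N (m+1)
      = ∑ p ∈ Finset.range (m+1),
          ((m+1).choose (p+1)) • lieComm (adPow S p N) (adPow S (m-p) M) := by
    calc Qm S M N (m+1)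
        = ∑ i ∈ Finset.range (m+1), adPow S i (lieComm N (adPow S (m-i) M)) := by
          unfold Qm
          refine Finset.sum_congr rfl fun i hi => ?_
          have h1 : m + 1 - 1 - i = m - i := by omega
          rw [h1]
      _ = ∑ i ∈ Finset.range (m+1), ∑ p ∈ Finset.range (m+1),
            (i.choose p) • lieComm (adPow S p N) (adPow S (m-p) M) := by
          refine Finset.sum_congr rfl fun i hi => ?_
          rw [Finset.mem_range] at hi
          rw [adPow_lieComm]
          have e1 : ∀ p ∈ Finset.range (i+1),
              (i.choose p) • lieComm (adPow S p N) (adPow S (i-p) (adPow S (m-i) M))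
              = (i.choose p) • lieComm (adPow S p N) (adPow S (m-p) M) := by
            intro p hp
            rw [Finset.mem_range] at hp
            rw [← adPow_add_exp]
            have h2 : i - p + (m - i) = m - p := by omega
            rw [h2]
          rw [Finset.sum_congr rfl e1]
          refine Finset.sum_subset (Finset.range_subset_range.mpr (by omega)) ?_
          intro p hp hnp
          rw [Finset.mem_range] at hp
          rw [Finset.mem_range] at hnp
          rw [Nat.choose_eq_zero_of_lt (by omega), zero_smul]
      _ = ∑ p ∈ Finset.range (m+1), ∑ i ∈ Finset.range (m+1),
            (i.choose p) • lieComm (adPow S p N) (adPow S (m-p) M) := Finset.sum_comm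
      _ = ∑ p ∈ Finset.range (m+1),
            ((m+1).choose (p+1)) • lieComm (adPow S p N) (adPow S (m-p) M) := by
          refine Finset.sum_congr rfl fun p hp => ?_
          rw [← Finset.sum_smul, sum_choose_col]
  rw [hQ, Finset.Nat.sum_antidiagonal_eq_sum_range_succ_mk, Finset.smul_sum, Finset.smul_sum]
  refine Finset.sum_congr rfl fun p hp => ?_
  rw [Finset.mem_range] at hp
  rw [Zc_mk]
  rw [← Nat.cast_smul_eq_nsmul ℝ, smul_smul, smul_smul]
  congr 1
  have hp1 : p + 1 ≤ m + 1 := by omega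
  have hfac : ((m+1).choose (p+1) : ℝ) * ((p+1).factorial : ℝ) * (((m-p).factorial : ℝ))
      = ((m+1).factorial : ℝ) := by
    have h := Nat.choose_mul_factorial_mul_factorial hp1
    have h2 : m + 1 - (p + 1) = m - p := by omega
    rw [h2] at h
    exact_mod_cast h
  have hne1 : ((p+1).factorial : ℝ) ≠ 0 := by
    exact_mod_cast (Nat.factorial_pos _).ne'
  have hne2 : (((m-p).factorial : ℝ)) ≠ 0 := by
    exact_mod_cast (Nat.factorial_pos _).ne'
  have hne3 : (((m+1).choose (p+1) : ℕ) : ℝ) ≠ 0 := by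
    exact_mod_cast (Nat.choose_pos hp1).ne'
  have hgoal : ((m+1).factorial : ℝ)⁻¹ * ((m+1).choose (p+1) : ℝ)
      = ((p+1).factorial : ℝ)⁻¹ * (((m-p).factorial : ℝ))⁻¹ := by
    rw [← hfac]
    field_simp
  have h1 : ((m+2).factorial : ℝ) = ((m:ℝ)+2) * ((m+1).factorial : ℝ) := by
    rw [Nat.factorial_succ]
    push_cast
    ring
  rw [h1, mul_inv, mul_assoc, hgoal]
  push_cast
  ring

lemma tsum_antidiagonal_eq {h : ℕ × ℕ → Mat d} (hh : Summable h) :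
    ∑' p : ℕ × ℕ, h p = ∑' n : ℕ, ∑ kl ∈ Finset.HasAntidiagonal.antidiagonal n, h kl := by
  conv_rhs => congr; ext; rw [← Finset.sum_finset_coe, ← tsum_fintype (L := SummationFilter.unconditional _)]
  rw [← Finset.HasAntidiagonal.sigmaAntidiagonalEquivProd.tsum_eq h]
  exact Summable.tsum_sigma' (fun n => (hasSum_fintype _).summable)
    (Finset.HasAntidiagonal.sigmaAntidiagonalEquivProd.summable_iff.mpr hh)

lemma summable_coefZ :
    Summable (fun p : ℕ × ℕ => (((p.1 + p.2 + 2 : ℕ)) : ℝ)⁻¹ • Zc S M N p) := by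
  refine Summable.of_norm_bounded (summable_normZ S M N) fun p => ?_
  rw [norm_smul_Mat]
  have h2 : (1:ℝ) ≤ ((p.1 + p.2 + 2 : ℕ) : ℝ) := by
    exact_mod_cast Nat.one_le_iff_ne_zero.mpr (by omega)
  have h3 : |(((p.1 + p.2 + 2 : ℕ)) : ℝ)⁻¹| ≤ 1 := by
    rw [abs_of_nonneg (by positivity)]
    exact inv_le_one_of_one_le₀ h2
  calc |(((p.1 + p.2 + 2 : ℕ)) : ℝ)⁻¹| * ‖Zc S M N p‖ ≤ 1 * ‖Zc S M N p‖ :=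
        mul_le_mul_of_nonneg_right h3 (norm_nonneg _)
    _ = ‖Zc S M N p‖ := one_mul _

lemma D_eq :
    ∑' n : ℕ, (((n+1).factorial : ℝ))⁻¹ • Qm S M N n
      = ∑' p : ℕ × ℕ, (((p.1 + p.2 + 2 : ℕ)) : ℝ)⁻¹ • Zc S M N p := by
  rw [tsum_antidiagonal_eq (summable_coefZ S M N)]
  have hterm : ∀ n : ℕ,
      ∑ kl ∈ Finset.HasAntidiagonal.antidiagonal n, (((kl.1 + kl.2 + 2 : ℕ)) : ℝ)⁻¹ • Zc S M N kl
      = (((n + 2 : ℕ)) : ℝ)⁻¹ • ∑ kl ∈ Finset.HasAntidiagonal.antidiagonal n, Zc S M N kl := by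
    intro n
    rw [Finset.smul_sum]
    refine Finset.sum_congr rfl fun kl hkl => ?_
    rw [Finset.HasAntidiagonal.mem_antidiagonal] at hkl
    have h1 : kl.1 + kl.2 + 2 = n + 2 := by omega
    rw [h1]
  rw [tsum_congr hterm]
  rw [Summable.tsum_eq_zero_add (summable_cQm S M N)]
  have h0 : Qm S M N 0 = 0 := by
    unfold Qm
    rw [Finset.range_zero, Finset.sum_empty]
  rw [h0, smul_zero, zero_add]
  refine tsum_congr fun m => ?_
  have h2 : (m + 1 + 1).factorial = (m + 2).factorial := rfl
  rw [h2, perM]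

end Final

end Stmt4Aux

open Stmt4Aux in
/-- The function `t ↦ dexp_{Σ+tN}(M)` is differentiable at `t = 0` with
derivative `∫_0^1 τ [dexp_{τΣ}(N), e^{τΣ} M e^{−τΣ}] dτ`. -/
theorem stmt4 (d : ℕ) (hd : 1 ≤ d) (S M N : Mat d) :
    HasDerivAt (fun t : ℝ => dexp (S + t • N) M)
      (∫ τ in (0:ℝ)..1,
        τ • lieComm (dexp (τ • S) N)
          (NormedSpace.exp (τ • S) * M * NormedSpace.exp (-(τ • S)))) 0 := by
  have hfun : (fun t : ℝ => dexp (S + t • N) M)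
      = fun t : ℝ =>
          (∑' n : ℕ, (((n+1).factorial : ℝ))⁻¹ • (adC S + t • adC N) ^ n) M := by
    funext t
    rw [dexp_eq_tsum_real, tsum_apply_E (summable_cG S N t)]
    refine tsum_congr fun n => ?_
    rw [ContinuousLinearMap.smul_apply, adPow_eq, adC_add, adC_smul]
  have hDM := (hasDerivAt_F S N).clm_apply (hasDerivAt_const (0:ℝ) M)
  simp only [map_zero, add_zero] at hDM
  have hval : (∑' n : ℕ, (((n+1).factorial : ℝ))⁻¹ • Pn S N n 0) M
      = ∑' n : ℕ, (((n+1).factorial : ℝ))⁻¹ • Qm S M N n := by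
    rw [tsum_apply_E (summable_cPn0 S N)]
    exact tsum_congr fun n => by rw [ContinuousLinearMap.smul_apply, PnM]
  have hI : (∫ τ in (0:ℝ)..1,
      τ • lieComm (dexp (τ • S) N)
        (NormedSpace.exp (τ • S) * M * NormedSpace.exp (-(τ • S)))) = _ := integral_eq S M N
  rw [hI, ← D_eq S M N, hfun]
  rw [hval] at hDM
  exact hDM
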